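/- For a polynomial $h$ and $\overline{A}=((\alpha_1,d_1);\ldots;(\alpha_m,d_m))$ with $d=\sum d_i$, the determinant of the square generalized Wronskian matrix $W_h(\overline{A})$ equals $\big(\prod_{1\le i<j\le m}(\alpha_j-\alpha_i)^{d_i d_j}\big)\, h(\alpha_1)^{d_1}\cdots h(\alpha_m)^{d_m}$. -/

import Mathlib

open Finset Polynomial

/-- The position in `Fin (∑ i, d i)` of the `j`-th column of the `i`-th block. -/
def sigmaToFin {m : ℕ} (d : Fin m → ℕ) (p : Σ i, Fin (d i)) : Fin (∑ i, d i) :=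
  ⟨∑ i ∈ Finset.univ.filter (fun i => i < p.1), d i + (p.2 : ℕ), by
    have h1 : (p.2 : ℕ) < d p.1 := p.2.isLt
    have h2 : d p.1 + ∑ i ∈ Finset.univ.filter (fun i => i < p.1), d i ≤ ∑ i, d i := by
      rw [← Finset.sum_insert (by simp)]
      exact Finset.sum_le_sum_of_subset (Finset.subset_univ _)
    omega⟩

/-- The square generalized Wronskian matrix `W_h(Ā)`: the row `k`, column `(i,j)`
entry is `(1/j!) * (z^k h(z))^{(j)}` evaluated at `z = α i`, blocks ordered by `i`. -/
noncomputable def confWronskian {K : Type*} [Field K] (h : Polynomial K) {m : ℕ}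
    (α : Fin m → K) (d : Fin m → ℕ) :
    Matrix (Fin (∑ i, d i)) (Fin (∑ i, d i)) K :=
  Matrix.of fun k c =>
    ∑ p : Σ i, Fin (d i),
      if (sigmaToFin d p : ℕ) = (c : ℕ) then
        (((p.2 : ℕ).factorial : K))⁻¹ *
          Polynomial.eval (α p.1) (Polynomial.derivative^[(p.2 : ℕ)] (X ^ (k : ℕ) * h))
      else 0


namespace ConfW

variable {m : ℕ}

/-- numeric position of `(i,j)` in block concatenation -/
def sIdx (d : Fin m → ℕ) (p : (i : Fin m) × Fin (d i)) : ℕ :=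
  ∑ i ∈ Finset.univ.filter (fun i => i < p.1), d i + (p.2 : ℕ)

lemma sIdx_lt (d : Fin m → ℕ) (p : (i : Fin m) × Fin (d i)) : sIdx d p < ∑ i, d i := by
  have h1 : (p.2 : ℕ) < d p.1 := p.2.isLt
  have h2 : d p.1 + ∑ i ∈ Finset.univ.filter (fun i => i < p.1), d i ≤ ∑ i, d i := by
    rw [← Finset.sum_insert (by simp)]
    exact Finset.sum_le_sum_of_subset (Finset.subset_univ _)
  unfold sIdx; omega

lemma sIdx_mono (d : Fin m → ℕ) (p q : (i : Fin m) × Fin (d i)) (h : p.1 < q.1) :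
    sIdx d p < sIdx d q := by
  have h2 : d p.1 + ∑ i ∈ Finset.univ.filter (fun i => i < p.1), d i ≤
      ∑ i ∈ Finset.univ.filter (fun i => i < q.1), d i := by
    rw [← Finset.sum_insert (by simp)]
    apply Finset.sum_le_sum_of_subset
    intro x hx
    simp only [Finset.mem_insert, Finset.mem_filter, Finset.mem_univ, true_and] at hx ⊢
    rcases hx with rfl | hx2
    · exact h
    · exact hx2.trans h
  have := p.2.isLt
  unfold sIdx
  omega

lemma sIdx_injective (d : Fin m → ℕ) : Function.Injective (sIdx d) := by
  intro p q hpq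
  rcases lt_trichotomy p.1 q.1 with h | h | h
  · exact absurd hpq (sIdx_mono d p q h).ne
  · obtain ⟨i, j⟩ := p
    obtain ⟨i', j'⟩ := q
    cases (show i = i' from h)
    unfold sIdx at hpq
    simp only at hpq
    have : (j : ℕ) = (j' : ℕ) := by omega
    simp [Fin.ext_iff, this]
  · exact absurd hpq.symm (sIdx_mono d q p h).ne

/-- block concatenation equivalence -/
noncomputable def sEquiv (d : Fin m → ℕ) : ((i : Fin m) × Fin (d i)) ≃ Fin (∑ i, d i) :=
  Equiv.ofBijective (fun p => ⟨sIdx d p, sIdx_lt d p⟩)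
    ((Fintype.bijective_iff_injective_and_card _).mpr
      ⟨fun p q h => sIdx_injective d (by simpa [Fin.ext_iff] using h), by simp⟩)

lemma sEquiv_val (d : Fin m → ℕ) (p : (i : Fin m) × Fin (d i)) :
    (sEquiv d p : ℕ) = sIdx d p := rfl

lemma sIdx_symm (d : Fin m → ℕ) (k : Fin (∑ i, d i)) :
    sIdx d ((sEquiv d).symm k) = (k : ℕ) := by
  conv_rhs => rw [← Equiv.apply_symm_apply (sEquiv d) k, sEquiv_val]

lemma sIdx_zero (d : Fin (m + 1) → ℕ) (j : Fin (d 0)) :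
    sIdx d ⟨0, j⟩ = (j : ℕ) := by
  unfold sIdx
  simp only
  rw [Finset.filter_false_of_mem (fun x _ => Fin.not_lt_zero x)]
  simp

lemma filter_lt_succ (d : Fin (m + 1) → ℕ) (i : Fin m) :
    Finset.univ.filter (fun k : Fin (m+1) => k < i.succ) =
      insert 0 ((Finset.univ.filter (fun k : Fin m => k < i)).map (Fin.succEmb m)) := by
  ext k
  cases k using Fin.cases with
  | zero => simp [Fin.succ_pos]
  | succ k =>
    simp only [Finset.mem_filter, Finset.mem_univ, true_and, Finset.mem_insert,
      Finset.mem_map, Fin.coe_succEmb]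
    constructor
    · intro hk
      exact Or.inr ⟨k, by simpa using Fin.succ_lt_succ_iff.mp hk, rfl⟩
    · rintro (h0 | ⟨x, hx, hxk⟩)
      · exact absurd h0 (Fin.succ_ne_zero k)
      · cases Fin.succ_injective _ hxk
        exact Fin.succ_lt_succ_iff.mpr (by simpa using hx)

lemma sIdx_succ (d : Fin (m + 1) → ℕ) (i : Fin m) (j : Fin (d i.succ)) :
    sIdx d ⟨i.succ, j⟩ = d 0 + sIdx (d ∘ Fin.succ) ⟨i, j⟩ := by
  unfold sIdx
  simp only [filter_lt_succ d i]
  rw [Finset.sum_insert (by simp [Fin.succ_ne_zero]), Finset.sum_map]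
  simp [add_assoc, Fin.coe_succEmb, Function.comp]


end ConfW

namespace ConfW

variable {K : Type*} [Field K] [CharZero K] {m : ℕ}

lemma taylor_X_sub_C_pow (a : K) (n : ℕ) : taylor a ((X - C a) ^ n) = X ^ n := by
  have h1 : taylor a (X - C a) = X := by
    rw [map_sub, taylor_X, taylor_C]; ring
  calc taylor a ((X - C a) ^ n) = taylorAlgHom a ((X - C a) ^ n) := rfl
    _ = (taylorAlgHom a (X - C a)) ^ n := map_pow _ _ _
    _ = X ^ n := by rw [show taylorAlgHom a (X - C a) = taylor a (X - C a) from rfl, h1]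

/-- Square generalized Wronskian-type matrix with row polynomials `f (sIdx d p) * h`. -/
noncomputable def Wm (h : K[X]) (α : Fin m → K) (d : Fin m → ℕ) (f : ℕ → K[X]) :
    Matrix ((i : Fin m) × Fin (d i)) ((i : Fin m) × Fin (d i)) K :=
  Matrix.of fun p q => ((taylor (α q.1) (f (sIdx d p) * h)).coeff (q.2 : ℕ))

/-- splitting equivalence for the first block -/
noncomputable def splitEquiv (d : Fin (m + 1) → ℕ) :
    (Fin (d 0) ⊕ ((i : Fin m) × Fin (d i.succ))) ≃ ((i : Fin (m + 1)) × Fin (d i)) :=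
  Equiv.ofBijective
    (Sum.elim (fun j => ⟨0, j⟩) (fun q => ⟨q.1.succ, q.2⟩))
    ⟨by
      rintro (j | q) (j' | q') h
      · simp only [Sum.elim_inl] at h
        obtain ⟨-, h2⟩ := Sigma.mk.inj_iff.mp h
        rw [eq_of_heq h2]
      · simp only [Sum.elim_inl, Sum.elim_inr] at h
        exact absurd (Sigma.mk.inj_iff.mp h).1 (Fin.succ_ne_zero _).symm
      · simp only [Sum.elim_inl, Sum.elim_inr] at h
        exact absurd (Sigma.mk.inj_iff.mp h).1 (Fin.succ_ne_zero _)
      · simp only [Sum.elim_inr] at h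
        obtain ⟨h1, h2⟩ := Sigma.mk.inj_iff.mp h
        obtain ⟨i, j⟩ := q; obtain ⟨i', j'⟩ := q'
        simp only at h1 h2
        cases Fin.succ_injective _ h1
        rw [eq_of_heq h2],
     by
      rintro ⟨i, j⟩
      induction i using Fin.cases with
      | zero => exact ⟨Sum.inl j, rfl⟩
      | succ i => exact ⟨Sum.inr ⟨i, j⟩, rfl⟩⟩

@[simp] lemma splitEquiv_inl (d : Fin (m + 1) → ℕ) (j : Fin (d 0)) :
    splitEquiv d (Sum.inl j) = ⟨0, j⟩ := rfl

@[simp] lemma splitEquiv_inr (d : Fin (m + 1) → ℕ) (q : (i : Fin m) × Fin (d i.succ)) :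
    splitEquiv d (Sum.inr q) = ⟨q.1.succ, q.2⟩ := rfl

lemma prod_Ioi_zero {M : Type*} [CommMonoid M] (f : Fin (m + 1) → M) :
    ∏ j ∈ Finset.Ioi (0 : Fin (m + 1)), f j = ∏ i : Fin m, f i.succ := by
  have : Finset.Ioi (0 : Fin (m + 1)) = Finset.univ.map (Fin.succEmb m) := by
    ext k
    cases k using Fin.cases with
    | zero => simp
    | succ k =>
      simp only [Finset.mem_Ioi, Finset.mem_map, Finset.mem_univ, Fin.coe_succEmb]
      exact ⟨fun _ => ⟨k, trivial, rfl⟩, fun _ => Fin.succ_pos k⟩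
  rw [this, Finset.prod_map]
  rfl

lemma prod_Ioi_succ {M : Type*} [CommMonoid M] (i : Fin m) (f : Fin (m + 1) → M) :
    ∏ j ∈ Finset.Ioi i.succ, f j = ∏ j ∈ Finset.Ioi i, f j.succ := by
  have : Finset.Ioi (i.succ) = (Finset.Ioi i).map (Fin.succEmb m) := by
    ext k
    cases k using Fin.cases with
    | zero =>
      simp only [Finset.mem_Ioi, Finset.mem_map, Finset.mem_univ, Fin.coe_succEmb]
      constructor
      · intro hk; exact absurd hk (by simp [Fin.lt_iff_val_lt_val])
      · rintro ⟨x, hx, hxk⟩; exact absurd hxk (Fin.succ_ne_zero x)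
    | succ k =>
      simp only [Finset.mem_Ioi, Finset.mem_map, Finset.mem_univ, Fin.coe_succEmb]
      constructor
      · intro hk; exact ⟨k, Fin.succ_lt_succ_iff.mp hk, rfl⟩
      · rintro ⟨x, hx, hxk⟩; cases Fin.succ_injective _ hxk
        exact Fin.succ_lt_succ_iff.mpr hx
  rw [this, Finset.prod_map]
  rfl

lemma taylor_factor_coeff (a : K) (D : ℕ) (f : K[X]) {j : ℕ} (hj : j < D) :
    (taylor a ((X - C a) ^ D * f)).coeff j = 0 := by
  rw [taylor_mul, taylor_X_sub_C_pow, coeff_X_pow_mul']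
  simp [Nat.not_le_of_lt hj]

lemma det_Wm (m : ℕ) (α : Fin m → K) (d : Fin m → ℕ) (h : K[X]) :
    (Wm h α d (fun k => X ^ k)).det =
      (∏ i, ∏ j ∈ Finset.Ioi i, (α j - α i) ^ (d i * d j)) *
        ∏ i, (Polynomial.eval (α i) h) ^ (d i) := by
  induction m generalizing h with
  | zero =>
      haveI : IsEmpty ((i : Fin 0) × Fin (d i)) := ⟨fun p => p.1.elim0⟩
      simp [Matrix.det_isEmpty]
  | succ m IH =>
      classical
      set gg : ((i : Fin (m+1)) × Fin (d i)) → K[X] :=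
        fun p => if p.1 = 0 then (X - C (α 0)) ^ (p.2 : ℕ)
          else X ^ (sIdx d p - d 0) * (X - C (α 0)) ^ (d 0) with hgg
      have hmonic : ∀ p, (gg p).Monic := by
        rintro ⟨i, j⟩
        induction i using Fin.cases with
        | zero => simpa [hgg] using (monic_X_sub_C (α 0)).pow _
        | succ i =>
            simpa [hgg, Fin.succ_ne_zero] using
              (monic_X_pow _).mul ((monic_X_sub_C (α 0)).pow (d 0))
      have hdeg : ∀ p, (gg p).natDegree = sIdx d p := by
        rintro ⟨i, j⟩
        induction i using Fin.cases with
        | zero => simp [hgg, sIdx_zero, natDegree_pow, natDegree_X_sub_C]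
        | succ i =>
            have h1 := sIdx_succ d i j
            simp only [hgg, Fin.succ_ne_zero, if_neg, if_false]
            rw [natDegree_mul (monic_X_pow _).ne_zero
              ((monic_X_sub_C (α 0)).pow (d 0)).ne_zero, natDegree_X_pow,
              natDegree_pow, natDegree_X_sub_C]
            omega
      set A : Matrix _ _ K := Matrix.of (fun p q : (i : Fin (m+1)) × Fin (d i) =>
          (taylor (α q.1) (gg p * h)).coeff (q.2 : ℕ)) with hA
      set B : Matrix _ _ K := Matrix.of (fun p r : (i : Fin (m+1)) × Fin (d i) =>
          (gg p).coeff (sIdx d r)) with hB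
      have hfac : A = B * Wm h α d (fun k => X ^ k) := by
        ext p q
        rw [Matrix.mul_apply]
        have hsum : ∑ r, B p r * Wm h α d (fun k => X ^ k) r q =
            ∑ k : Fin (∑ i, d i), (gg p).coeff (k : ℕ) *
              (taylor (α q.1) (X ^ (k : ℕ) * h)).coeff (q.2 : ℕ) := by
          rw [← Equiv.sum_comp (sEquiv d) (fun k : Fin (∑ i, d i) =>
            (gg p).coeff (k : ℕ) * (taylor (α q.1) (X ^ (k : ℕ) * h)).coeff (q.2 : ℕ))]
          apply Finset.sum_congr rfl
          intro r _
          rw [sEquiv_val]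
          rfl
        rw [hsum]
        simp only [hA, Matrix.of_apply]
        rw [Fin.sum_univ_eq_sum_range (fun k =>
          (gg p).coeff k * (taylor (α q.1) (X ^ k * h)).coeff (q.2 : ℕ))]
        conv_lhs => rw [show gg p = ∑ i ∈ Finset.range (∑ i, d i),
          (monomial i) ((gg p).coeff i) from as_sum_range' (gg p) _
            (by rw [hdeg]; exact sIdx_lt d p)]
        rw [Finset.sum_mul, map_sum, finset_sum_coeff]
        apply Finset.sum_congr rfl
        intro k _
        rw [← C_mul_X_pow_eq_monomial, mul_assoc, taylor_mul, taylor_C, coeff_C_mul]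
      have hdetB : B.det = 1 := by
        have h1 : B = (Matrix.of fun x y : Fin (∑ i, d i) =>
            (gg ((sEquiv d).symm y)).coeff (x : ℕ)).transpose.submatrix
              (sEquiv d) (sEquiv d) := by
          ext p r
          simp only [hB, Matrix.submatrix_apply, Matrix.transpose_apply, Matrix.of_apply,
            Equiv.symm_apply_apply]
          rw [sEquiv_val]
        rw [h1, Matrix.det_submatrix_equiv_self, Matrix.det_transpose]
        exact Matrix.det_matrixOfPolynomials _ (fun y => by rw [hdeg, sIdx_symm])
          (fun y => hmonic _)
      have hdetAW : (Wm h α d (fun k => X ^ k)).det = A.det := by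
        rw [hfac, Matrix.det_mul, hdetB, one_mul]
      have hblock : A.submatrix (splitEquiv d) (splitEquiv d) =
          Matrix.fromBlocks
            (Matrix.of fun j j' : Fin (d 0) => A ⟨0, j⟩ ⟨0, j'⟩)
            (Matrix.of fun j (q : (i : Fin m) × Fin ((d ∘ Fin.succ) i)) =>
              A ⟨0, j⟩ ⟨q.1.succ, q.2⟩)
            0
            (Matrix.of fun (p q : (i : Fin m) × Fin ((d ∘ Fin.succ) i)) =>
              A ⟨p.1.succ, p.2⟩ ⟨q.1.succ, q.2⟩) := by
        ext pq rs
        rcases pq with j | p <;> rcases rs with j' | q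
        · rfl
        · rfl
        · show A ⟨(p.1).succ, p.2⟩ ⟨0, j'⟩ = 0
          have h2 : gg ⟨(p.1).succ, p.2⟩ * h =
              (X - C (α 0)) ^ (d 0) *
                (X ^ (sIdx d ⟨(p.1).succ, p.2⟩ - d 0) * h) := by
            simp only [hgg, Fin.succ_ne_zero, if_neg, if_false]
            ring
          simp only [hA, Matrix.of_apply]
          rw [h2]
          exact taylor_factor_coeff (α 0) (d 0) _ j'.isLt
        · rfl
      have hT : (Matrix.of fun j j' : Fin (d 0) => A ⟨0, j⟩ ⟨0, j'⟩).det =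
          (eval (α 0) h) ^ (d 0) := by
        have hentry : ∀ j j' : Fin (d 0), A ⟨0, j⟩ ⟨0, j'⟩ =
            ((taylor (α 0) h) * X ^ (j : ℕ)).coeff (j' : ℕ) := by
          intro j j'
          simp only [hA, Matrix.of_apply, hgg, if_true]
          rw [taylor_mul, taylor_X_sub_C_pow, mul_comm]
        rw [Matrix.det_of_upperTriangular (by
          intro j j' hlt
          have hlt' : (j' : ℕ) < (j : ℕ) := hlt
          rw [Matrix.of_apply, hentry, coeff_mul_X_pow', if_neg (by omega)])]
        calc ∏ j : Fin (d 0), (Matrix.of fun j j' : Fin (d 0) => A ⟨0, j⟩ ⟨0, j'⟩) j j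
            = ∏ j : Fin (d 0), eval (α 0) h := by
              apply Finset.prod_congr rfl
              intro j _
              rw [Matrix.of_apply, hentry, coeff_mul_X_pow', if_pos le_rfl]
              simp [taylor_coeff_zero]
          _ = (eval (α 0) h) ^ (d 0) := by
              rw [Finset.prod_const, Finset.card_univ, Fintype.card_fin]
      have hA22 : (Matrix.of fun (p q : (i : Fin m) × Fin ((d ∘ Fin.succ) i)) =>
            A ⟨p.1.succ, p.2⟩ ⟨q.1.succ, q.2⟩) =
          Wm ((X - C (α 0)) ^ (d 0) * h) (α ∘ Fin.succ) (d ∘ Fin.succ)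
            (fun k => X ^ k) := by
        ext p q
        simp only [hA, Wm, Matrix.of_apply, hgg, Fin.succ_ne_zero, if_neg, if_false,
          Function.comp]
        congr 1
        have h1 := sIdx_succ d p.1 p.2
        rw [show sIdx d ⟨(p.1).succ, p.2⟩ - d 0 = sIdx (d ∘ Fin.succ) ⟨p.1, p.2⟩ from by
          omega]
        ring
      have hdetA : A.det = (eval (α 0) h) ^ (d 0) *
          ((∏ i, ∏ j ∈ Finset.Ioi i,
              ((α ∘ Fin.succ) j - (α ∘ Fin.succ) i) ^ ((d ∘ Fin.succ) i * (d ∘ Fin.succ) j)) *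
            ∏ i, (eval ((α ∘ Fin.succ) i) ((X - C (α 0)) ^ (d 0) * h)) ^ ((d ∘ Fin.succ) i)) := by
        rw [← Matrix.det_submatrix_equiv_self (splitEquiv d) A, hblock,
          Matrix.det_fromBlocks_zero₂₁, hT, hA22, IH]
      rw [hdetAW, hdetA]
      -- final algebra
      rw [Fin.prod_univ_succ (fun i => ∏ j ∈ Finset.Ioi i, (α j - α i) ^ (d i * d j)),
        Fin.prod_univ_succ (fun i => (eval (α i) h) ^ (d i)),
        prod_Ioi_zero (fun j => (α j - α 0) ^ (d 0 * d j))]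
      simp only [prod_Ioi_succ, Function.comp]
      simp only [eval_mul, eval_pow, eval_sub, eval_X, eval_C, mul_pow, ← pow_mul,
        Finset.prod_mul_distrib]
      ring


lemma inv_factorial_eval_iteratedDeriv (x : K) (f : K[X]) (j : ℕ) :
    ((j.factorial : K))⁻¹ * eval x (derivative^[j] f) = (taylor x f).coeff j := by
  rw [taylor_coeff]
  have h1 : (derivative^[j] : K[X] → K[X]) f = j.factorial • ((hasseDeriv j) f) := by
    rw [← factorial_smul_hasseDeriv]
    rfl
  rw [h1, nsmul_eq_mul, eval_mul, eval_natCast]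
  rw [inv_mul_cancel_left₀ (Nat.cast_ne_zero.mpr (Nat.factorial_ne_zero j))]

end ConfW

noncomputable section Final

open ConfW

theorem det_confWronskian' {K : Type*} [Field K] [CharZero K] (h : Polynomial K) {m : ℕ}
    (α : Fin m → K) (d : Fin m → ℕ)
    (sigmaToFin : ∀ (p : Σ i, Fin (d i)), Fin (∑ i, d i))
    (hs : ∀ p, (sigmaToFin p : ℕ) = sIdx d p)
    (M : Matrix (Fin (∑ i, d i)) (Fin (∑ i, d i)) K)
    (hM : M = Matrix.of fun (k c : Fin (∑ i, d i)) =>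
      ∑ p : Σ i, Fin (d i),
        if (sigmaToFin p : ℕ) = (c : ℕ) then
          (((p.2 : ℕ).factorial : K))⁻¹ *
            Polynomial.eval (α p.1) (Polynomial.derivative^[(p.2 : ℕ)] (X ^ (k : ℕ) * h))
        else 0) :
    M.det = (∏ i, ∏ j ∈ Finset.Ioi i, (α j - α i) ^ (d i * d j)) *
        ∏ i, (Polynomial.eval (α i) h) ^ (d i) := by
  classical
  have hconf : M = (Wm h α d (fun k => X ^ k)).submatrix
      (sEquiv d).symm (sEquiv d).symm := by
    rw [hM]
    ext k c
    simp only [Matrix.of_apply, Matrix.submatrix_apply, Wm]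
    have hcond : ∀ p : (i : Fin m) × Fin (d i),
        ((sigmaToFin p : ℕ) = (c : ℕ)) ↔ p = (sEquiv d).symm c := by
      intro p
      rw [hs]
      constructor
      · intro hp
        apply (sEquiv d).injective
        rw [Equiv.apply_symm_apply]
        exact Fin.ext hp
      · rintro rfl
        exact sIdx_symm d c
    simp only [hcond]
    rw [Finset.sum_ite_eq' Finset.univ ((sEquiv d).symm c)
      (fun p => (((p.2 : ℕ).factorial : K))⁻¹ *
        Polynomial.eval (α p.1) (Polynomial.derivative^[(p.2 : ℕ)] (X ^ (k : ℕ) * h)))]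
    rw [if_pos (Finset.mem_univ _)]
    rw [inv_factorial_eval_iteratedDeriv, sIdx_symm]
  rw [hconf, Matrix.det_submatrix_equiv_self, det_Wm]

end Final


theorem det_confWronskian {K : Type*} [Field K] [CharZero K] (h : Polynomial K) {m : ℕ}
    (α : Fin m → K) (d : Fin m → ℕ) :
    (confWronskian h α d).det =
      (∏ i, ∏ j ∈ Finset.Ioi i, (α j - α i) ^ (d i * d j)) *
        ∏ i, (Polynomial.eval (α i) h) ^ (d i) := by
  exact det_confWronskian' h α d (sigmaToFin d) (fun p => rfl) (confWronskian h α d) rfl
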